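/- Let n ≥ 1 and m be natural numbers, C and A₁,…,A_m real symmetric n×n matrices, b ∈ ℝᵐ, and M ≥ 0. Then for every y ∈ ℝᵐ and every positive semidefinite n×n matrix X satisfying ⟨A_j, X⟩ = b_j for all j and trace(X) ≤ M, one has ⟨C, X⟩ ≥ ⟨b, y⟩ + M · min( λ_min(C − Σ_j y_j A_j), 0 ). -/

import Mathlib

open Matrix

lemma psd_trace_nonneg {n : ℕ} {P : Matrix (Fin n) (Fin n) ℝ} (hP : P.PosSemidef) :
    0 ≤ P.trace := by
  rw [Matrix.trace]
  apply Finset.sum_nonneg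
  intro i _
  have := hP.diag_nonneg (i := i)
  simpa [Matrix.diag] using this

lemma trace_mul_psd_nonneg {n : ℕ} {P Q : Matrix (Fin n) (Fin n) ℝ}
    (hP : P.PosSemidef) (hQ : Q.PosSemidef) : 0 ≤ (P * Q).trace := by
  obtain ⟨B, rfl⟩ : ∃ B : Matrix (Fin n) (Fin n) ℝ, Q = Bᴴ * B := by
    open scoped MatrixOrder in
    exact CStarAlgebra.nonneg_iff_eq_star_mul_self.mp hQ.nonneg
  have h : (P * (Bᴴ * B)).trace = (B * P * Bᴴ).trace := by
    rw [← mul_assoc, Matrix.trace_mul_cycle]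
  rw [h]
  exact psd_trace_nonneg (hP.mul_mul_conjTranspose_same B)

lemma sub_smul_one_psd {n : ℕ} {S : Matrix (Fin n) (Fin n) ℝ} (hS : S.IsHermitian)
    {μ : ℝ} (hμ : ∀ i, μ ≤ hS.eigenvalues i) : (S - μ • 1).PosSemidef := by
  classical
  have h1 : (1 : Matrix (Fin n) (Fin n) ℝ) =
      (hS.eigenvectorUnitary : Matrix (Fin n) (Fin n) ℝ) * 1 *
        (star (hS.eigenvectorUnitary : Matrix (Fin n) (Fin n) ℝ)) := by
    rw [mul_one, (Matrix.mem_unitaryGroup_iff).mp hS.eigenvectorUnitary.2]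
  have hdec : S - μ • 1 =
      (hS.eigenvectorUnitary : Matrix (Fin n) (Fin n) ℝ) *
        (Matrix.diagonal (fun i => hS.eigenvalues i - μ)) *
        (star (hS.eigenvectorUnitary : Matrix (Fin n) (Fin n) ℝ)) := by
    conv_lhs => rw [hS.spectral_theorem, Unitary.conjStarAlgAut_apply, h1]
    rw [← smul_mul_assoc, ← mul_smul_comm, ← Matrix.sub_mul, ← Matrix.mul_sub]
    congr 2
    ext i j
    by_cases h : i = j <;>
      simp [Matrix.diagonal_apply, h, Matrix.smul_apply, Matrix.one_apply, Matrix.sub_apply]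
  rw [hdec]
  have : (Matrix.diagonal (fun i => hS.eigenvalues i - μ)).PosSemidef :=
    Matrix.PosSemidef.diagonal (fun i => sub_nonneg.mpr (hμ i))
  exact this.mul_mul_conjTranspose_same _

/-- The smallest eigenvalue of a real symmetric matrix (defined via the spectral
theorem; the value is irrelevant for non-Hermitian input). -/
noncomputable def minEigenvalue {n : ℕ} (A : Matrix (Fin n) (Fin n) ℝ) : ℝ :=
  if h : A.IsHermitian then ⨅ i, h.eigenvalues i else 0

/-- A valid lower bound on the primal SDP objective computable from any dual vector
`y ∈ ℝᵐ`: if every primal feasible `X` has `trace(X) ≤ M`, then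
`⟨C, X⟩ ≥ ⟨b, y⟩ + M · min(λ_min(C − Σ_j y_j A_j), 0)`. -/
theorem sdp_suboptimality_lower_bound (n m : ℕ) (hn : 1 ≤ n)
    (C : Matrix (Fin n) (Fin n) ℝ) (A : Fin m → Matrix (Fin n) (Fin n) ℝ)
    (b : Fin m → ℝ) (hC : C.IsSymm) (hA : ∀ j, (A j).IsSymm)
    (M : ℝ) (hM : 0 ≤ M) :
    ∀ (y : Fin m → ℝ) (X : Matrix (Fin n) (Fin n) ℝ), X.PosSemidef →
      (∀ j, Matrix.trace ((A j)ᵀ * X) = b j) → Matrix.trace X ≤ M →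
      Matrix.trace (Cᵀ * X) ≥
        ∑ j, b j * y j + M * min (minEigenvalue (C - ∑ j, y j • A j)) 0 := by
  intro y X hX hfeas htr
  classical
  set S : Matrix (Fin n) (Fin n) ℝ := C - ∑ j, y j • A j with hSdef
  have hS : S.IsHermitian := by
    rw [Matrix.IsHermitian, conjTranspose_eq_transpose_of_trivial, hSdef,
      transpose_sub, transpose_sum]
    simp only [transpose_smul]
    rw [hC.eq]
    congr 1
    exact Finset.sum_congr rfl fun j _ => by rw [(hA j).eq]
  set μ : ℝ := min (minEigenvalue S) 0 with hμdef
  have hmin : minEigenvalue S = ⨅ i, hS.eigenvalues i := dif_pos hS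
  have hμle : ∀ i, μ ≤ hS.eigenvalues i := fun i =>
    le_trans (min_le_left _ _) (hmin ▸ ciInf_le (Set.Finite.bddBelow (Set.finite_range _)) i)
  have hμ0 : μ ≤ 0 := min_le_right _ _
  have hPSD : (S - μ • 1).PosSemidef := sub_smul_one_psd hS hμle
  have key : 0 ≤ ((S - μ • 1) * X).trace := trace_mul_psd_nonneg hPSD hX
  have hexp : ((S - μ • 1) * X).trace = (S * X).trace - μ * X.trace := by
    rw [Matrix.sub_mul, Matrix.trace_sub, Matrix.smul_mul, Matrix.trace_smul, one_mul,
      smul_eq_mul]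
  have hSX : (S * X).trace ≥ μ * M := by
    have h1 : μ * X.trace ≤ (S * X).trace := by linarith [key, hexp.symm.le, hexp.le]
    have h2 : μ * M ≤ μ * X.trace := mul_le_mul_of_nonpos_left htr hμ0
    linarith
  have hdecomp : (S * X).trace = (Cᵀ * X).trace - ∑ j, y j * b j := by
    rw [hSdef, Matrix.sub_mul, Matrix.trace_sub, Finset.sum_mul, Matrix.trace_sum]
    congr 1
    · rw [hC.eq]
    · refine Finset.sum_congr rfl fun j _ => ?_
      rw [Matrix.smul_mul, Matrix.trace_smul, smul_eq_mul, ← hfeas j, (hA j).eq]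
  have : ∑ j, b j * y j = ∑ j, y j * b j := Finset.sum_congr rfl fun j _ => mul_comm _ _
  rw [ge_iff_le, this]
  have := hSX
  rw [hdecomp] at this
  linarith [this]
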